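/- Let j, m ∈ N, ℓ := n/2^{j+m}, k := 2^{2m}, and fix δ, η > 0 and constants 0 < α < b. There exists C > 0 such that for all sufficiently small ε > 0 and all sufficiently large n the following holds for every function PT as in the hypotheses and every v ∈ {1,…,2^j}²: if Tile_n(j,v) is (δ, S¹(η), ℓ, k, ε)-Stable, then every point of Tile_n(j,v) is (2δ, S¹(η), ℓ', k')-Stable, where ℓ' := max(C√ε·(n/2^j), ℓ) and k' := kℓ/ℓ'. -/

import Mathlib

noncomputable section

/-- Euclidean norm on `ℝ²`. -/
def norm2 (p : ℝ × ℝ) : ℝ := Real.sqrt (p.1 ^ 2 + p.2 ^ 2)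

/-- The box `[-r, r]² ⊆ ℝ²`. -/
def Box (r : ℝ) : Set (ℝ × ℝ) := {p | |p.1| ≤ r ∧ |p.2| ≤ r}

/-- The lattice box `[-r, r]² ∩ ℤ²`. -/
def LBox (r : ℝ) : Set (ℤ × ℤ) := {z | |(z.1 : ℝ)| ≤ r ∧ |(z.2 : ℝ)| ≤ r}

/-- The unit vector at angle `a`. -/
def dir (a : ℝ) : ℝ × ℝ := (Real.cos a, Real.sin a)

/-- `z` is `(δ, θ, ℓ, k)`-stable for the distance function `D`: for every integer
`1 ≤ k' ≤ k`, `k'·D(z, z+ℓθ)/(1+δ) ≤ D(z, z+k'ℓθ) ≤ (1+δ)·k'·D(z, z+ℓθ)`. -/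
def StablePt (D : ℝ × ℝ → ℝ × ℝ → ℝ) (δ : ℝ) (θ : ℝ × ℝ) (ℓ : ℝ) (k : ℝ)
    (z : ℝ × ℝ) : Prop :=
  ∀ k' : ℕ, 1 ≤ k' → (k' : ℝ) ≤ k →
    (k' : ℝ) * D z (z + ℓ • θ) / (1 + δ) ≤ D z (z + ((k' : ℝ) * ℓ) • θ) ∧
      D z (z + ((k' : ℝ) * ℓ) • θ) ≤ (1 + δ) * (k' : ℝ) * D z (z + ℓ • θ)

/-- `z` is `(δ, S¹(η), ℓ, k)`-stable: it is `(δ, θ, ℓ, k)`-stable for every direction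
`θ` in the discretized circle `S¹(η) = {0, η, 2η, …, 2π − η}`. -/
def StableDirs (D : ℝ × ℝ → ℝ × ℝ → ℝ) (δ η ℓ k : ℝ) (z : ℝ × ℝ) : Prop :=
  ∀ i : ℕ, (i : ℝ) * η ≤ 2 * Real.pi - η → StablePt D δ (dir ((i : ℝ) * η)) ℓ k z

/-- The gradient function `grad(z, θ, ℓ) = D(z, z + ℓθ)/ℓ`. -/
def grad (D : ℝ × ℝ → ℝ × ℝ → ℝ) (z : ℝ × ℝ) (θ : ℝ × ℝ) (ℓ : ℝ) : ℝ :=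
  D z (z + ℓ • θ) / ℓ

/-- `D : ℝ² × ℝ² → [0,∞)` satisfies the triangle inequality, `D(x,y) ≤ 3b|x−y| + 2b`
everywhere, and `α|x−y| ≤ D(x,y)` for `x, y ∈ Box(R)` with `|x−y| ≥ rt`. -/
def GoodPT (α b R rt : ℝ) (D : ℝ × ℝ → ℝ × ℝ → ℝ) : Prop :=
  (∀ x y, 0 ≤ D x y) ∧
  (∀ x y z, D x z ≤ D x y + D y z) ∧
  (∀ x y, D x y ≤ 3 * b * norm2 (x - y) + 2 * b) ∧
  (∀ x y, x ∈ Box R → y ∈ Box R → rt ≤ norm2 (x - y) → α * norm2 (x - y) ≤ D x y)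

/-- Index set `{1, …, 2^j}²` for the tiles of `Box(r)`. -/
def Idx (j : ℕ) : Set (ℕ × ℕ) := {v | 1 ≤ v.1 ∧ v.1 ≤ 2 ^ j ∧ 1 ≤ v.2 ∧ v.2 ≤ 2 ^ j}

/-- `Tile r j v`: the `v`-th closed square tile in the partition of `Box(r) = [-r,r]²`
into `2^{2j}` congruent axis-parallel squares, `v ∈ {1, …, 2^j}²`. -/
def Tile (r : ℝ) (j : ℕ) (v : ℕ × ℕ) : Set (ℝ × ℝ) :=
  {p | -r + ((v.1 : ℝ) - 1) * (2 * r / 2 ^ j) ≤ p.1 ∧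
       p.1 ≤ -r + (v.1 : ℝ) * (2 * r / 2 ^ j) ∧
       -r + ((v.2 : ℝ) - 1) * (2 * r / 2 ^ j) ≤ p.2 ∧
       p.2 ≤ -r + (v.2 : ℝ) * (2 * r / 2 ^ j)}

/-- The lattice points of a tile. -/
def TileLat (r : ℝ) (j : ℕ) (v : ℕ × ℕ) : Set (ℤ × ℤ) :=
  {z | ((z.1 : ℝ), (z.2 : ℝ)) ∈ Tile r j v}

/-- `Tile r j v` is `(δ, S¹(η), ℓ, k, ε)`-stable: at least a `(1−ε)` fraction of its
lattice points are `(δ, S¹(η), ℓ, k)`-stable. -/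
def TileFracStable (D : ℝ × ℝ → ℝ × ℝ → ℝ) (δ η ℓ k ε : ℝ) (r : ℝ) (j : ℕ)
    (v : ℕ × ℕ) : Prop :=
  (1 - ε) * ((TileLat r j v).ncard : ℝ) ≤
    (({z ∈ TileLat r j v | StableDirs D δ η ℓ k ((z.1 : ℝ), (z.2 : ℝ))}).ncard : ℝ)

/-- `Tile r j v` is `(δ, ℓ, k)`-stable: for all `z, z'` in the tile, every unit
direction `θ` and all integers `1 ≤ k₁, k₂ ≤ k`,
`1/(1+δ) ≤ grad(z,θ,k₁ℓ)/grad(z',θ,k₂ℓ) ≤ 1+δ`. -/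
def TileGradStable (D : ℝ × ℝ → ℝ × ℝ → ℝ) (δ ℓ k : ℝ) (r : ℝ) (j : ℕ)
    (v : ℕ × ℕ) : Prop :=
  ∀ z ∈ Tile r j v, ∀ z' ∈ Tile r j v, ∀ θ : ℝ × ℝ, norm2 θ = 1 →
    ∀ k₁ k₂ : ℕ, 1 ≤ k₁ → (k₁ : ℝ) ≤ k → 1 ≤ k₂ → (k₂ : ℝ) ≤ k →
      1 / (1 + δ) ≤ grad D z θ ((k₁ : ℝ) * ℓ) / grad D z' θ ((k₂ : ℝ) * ℓ) ∧
        grad D z θ ((k₁ : ℝ) * ℓ) / grad D z' θ ((k₂ : ℝ) * ℓ) ≤ 1 + δ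

/-- With `ℓ := n/2^{j+m}`, `k := 2^{2m}`: there exists `C > 0` such
that for all sufficiently small `ε > 0` and all sufficiently large `n`, if
`Tile_n(j,v)` is `(δ, S¹(η), ℓ, k, ε)`-stable then every point of `Tile_n(j,v)` is
`(2δ, S¹(η), ℓ', k')`-stable, where `ℓ' := max(C√ε·(n/2^j), ℓ)` and `k' := kℓ/ℓ'`. -/
lemma norm2_nonneg' (p : ℝ × ℝ) : 0 ≤ norm2 p := Real.sqrt_nonneg _

lemma norm2_le_abs_add (p : ℝ × ℝ) : norm2 p ≤ |p.1| + |p.2| := by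
  rw [norm2]
  have h : p.1 ^ 2 + p.2 ^ 2 ≤ (|p.1| + |p.2|) ^ 2 := by
    nlinarith [abs_nonneg p.1, abs_nonneg p.2, sq_abs p.1, sq_abs p.2]
  calc Real.sqrt (p.1 ^ 2 + p.2 ^ 2) ≤ Real.sqrt ((|p.1| + |p.2|) ^ 2) :=
        Real.sqrt_le_sqrt h
    _ = |p.1| + |p.2| := Real.sqrt_sq (by positivity)

lemma norm2_sub_comm (p q : ℝ × ℝ) : norm2 (p - q) = norm2 (q - p) := by
  have h1 : (p - q).1 = -((q - p).1) := by simp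
  have h2 : (p - q).2 = -((q - p).2) := by simp
  rw [norm2, norm2, h1, h2, neg_pow, neg_pow]
  ring_nf

lemma norm2_smul_dir (w a : ℝ) (hw : 0 ≤ w) : norm2 (w • dir a) = w := by
  have h1 : (w • dir a).1 = w * Real.cos a := rfl
  have h2 : (w • dir a).2 = w * Real.sin a := rfl
  rw [norm2, h1, h2]
  have : (w * Real.cos a) ^ 2 + (w * Real.sin a) ^ 2 = w ^ 2 := by
    have := Real.sin_sq_add_cos_sq a; nlinarith
  rw [this, Real.sqrt_sq hw]

lemma dir_abs_fst (a : ℝ) : |(dir a).1| ≤ 1 := by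
  simpa [dir] using Real.abs_cos_le_one a

lemma dir_abs_snd (a : ℝ) : |(dir a).2| ≤ 1 := by
  simpa [dir] using Real.abs_sin_le_one a

lemma D_shift {α b R rt : ℝ} {D : ℝ × ℝ → ℝ × ℝ → ℝ} (hD : GoodPT α b R rt D)
    (hb : 0 < b) {p q r s : ℝ × ℝ} {ρ : ℝ}
    (h1 : norm2 (r - p) ≤ ρ) (h2 : norm2 (q - s) ≤ ρ) :
    D p q ≤ D r s + 2 * (3 * b * ρ + 2 * b) := by
  obtain ⟨h0, htri, hub, _⟩ := hD
  have t1 : D p q ≤ D p r + D r q := htri p r q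
  have t2 : D r q ≤ D r s + D s q := htri r s q
  have u1 : D p r ≤ 3 * b * norm2 (p - r) + 2 * b := hub p r
  have u2 : D s q ≤ 3 * b * norm2 (s - q) + 2 * b := hub s q
  rw [norm2_sub_comm p r] at u1
  rw [norm2_sub_comm s q] at u2
  have hb3 : (0:ℝ) ≤ 3 * b := by linarith
  nlinarith [mul_le_mul_of_nonneg_left h1 hb3, mul_le_mul_of_nonneg_left h2 hb3]
lemma le_Icc_card (u w B : ℝ) (h : B ≤ w - u) :
    B - 1 ≤ ((Finset.Icc ⌈u⌉ ⌊w⌋).card : ℝ) := by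
  rw [Int.card_Icc]
  have h1 : w - 1 < (⌊w⌋ : ℝ) := Int.sub_one_lt_floor w
  have h2 : (⌈u⌉ : ℝ) < u + 1 := Int.ceil_lt_add_one u
  have h3 := Int.self_le_toNat (⌊w⌋ + 1 - ⌈u⌉)
  have h4 : ((⌊w⌋ + 1 - ⌈u⌉ : ℤ) : ℝ) ≤ (((⌊w⌋ + 1 - ⌈u⌉).toNat : ℕ) : ℝ) := by
    exact_mod_cast h3
  push_cast at h4 ⊢
  linarith

lemma Icc_card_le (u w B : ℝ) (hB : 0 ≤ B) (h : w - u ≤ B) :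
    ((Finset.Icc ⌈u⌉ ⌊w⌋).card : ℝ) ≤ B + 1 := by
  rw [Int.card_Icc]
  have h1 : (⌊w⌋ : ℝ) ≤ w := Int.floor_le w
  have h2 : u ≤ (⌈u⌉ : ℝ) := Int.le_ceil u
  rcases le_or_gt (⌊w⌋ + 1 - ⌈u⌉ : ℤ) 0 with h3 | h3
  · rw [Int.toNat_eq_zero.mpr h3]
    push_cast
    linarith
  · have h4 : (((⌊w⌋ + 1 - ⌈u⌉).toNat : ℕ) : ℝ) = ((⌊w⌋ + 1 - ⌈u⌉ : ℤ) : ℝ) := by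
      exact_mod_cast Int.toNat_of_nonneg h3.le
    rw [h4]
    push_cast
    linarith
lemma final_arith (δ e G A X Y K : ℝ) (hδ : 0 < δ) (he0 : 0 ≤ e) (hK : 1 ≤ K)
    (hGpos : 0 < G) (he4 : 4 * (1 + δ) * (1 + 2 * δ) * e ≤ δ * G)
    (hS1 : K * G / (1 + δ) ≤ A) (hS2 : A ≤ (1 + δ) * K * G)
    (h1 : Y ≤ G + 2 * e) (h2 : G ≤ Y + 2 * e) (h3 : X ≤ A + 2 * e)
    (h4 : A ≤ X + 2 * e) :
    K * Y / (1 + 2 * δ) ≤ X ∧ X ≤ (1 + 2 * δ) * K * Y := by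
  have h1δ : (0:ℝ) < 1 + δ := by linarith
  have h2δ : (0:ℝ) < 1 + 2 * δ := by linarith
  have hK0 : (0:ℝ) ≤ K := by linarith
  have m2 : K * G ≤ (1 + δ) * A := by
    rw [div_le_iff₀ h1δ] at hS1; linarith
  have m9 : K * (4 * (1 + δ) * (1 + 2 * δ) * e) ≤ K * (δ * G) :=
    mul_le_mul_of_nonneg_left he4 hK0
  have m10a : 0 ≤ (K - 1) * e := mul_nonneg (by linarith) he0
  have m10b : 0 ≤ δ * ((K - 1) * e) := mul_nonneg hδ.le m10a
  have m10c : 0 ≤ δ * (δ * ((K - 1) * e)) := mul_nonneg hδ.le m10b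
  have m10d : 0 ≤ δ * (K * e) := mul_nonneg hδ.le (mul_nonneg hK0 he0)
  have m10e : 0 ≤ δ * (δ * (K * e)) := mul_nonneg hδ.le m10d
  constructor
  · rw [div_le_iff₀ h2δ]
    have m1 : ((1 + δ) * K) * Y ≤ ((1 + δ) * K) * (G + 2 * e) :=
      mul_le_mul_of_nonneg_left h1 (by positivity)
    have m3 : (1 + δ) * (K * G) ≤ (1 + δ) * ((1 + δ) * A) :=
      mul_le_mul_of_nonneg_left m2 h1δ.le
    have m5 : ((1 + δ) * (1 + δ)) * A ≤ ((1 + δ) * (1 + δ)) * (X + 2 * e) :=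
      mul_le_mul_of_nonneg_left h4 (by positivity)
    have m7 : δ * (K * G) ≤ δ * ((1 + δ) * A) :=
      mul_le_mul_of_nonneg_left m2 hδ.le
    have m8 : (δ * (1 + δ)) * A ≤ (δ * (1 + δ)) * (X + 2 * e) :=
      mul_le_mul_of_nonneg_left h4 (by positivity)
    have big : (1 + δ) * (K * Y) ≤ (1 + δ) * (X * (1 + 2 * δ)) := by
      nlinarith [m1, m3, m5, m7, m8, m9, m10a, m10b, m10c]
    exact le_of_mul_le_mul_left big h1δ
  · have u2 : ((1 + 2 * δ) * K) * G ≤ ((1 + 2 * δ) * K) * (Y + 2 * e) :=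
      mul_le_mul_of_nonneg_left h2 (by positivity)
    nlinarith [u2, hS2, h3, m9, m10a, m10b, m10c, m10d, m10e]
set_option maxHeartbeats 1000000 in
lemma exists_stable_near (D : ℝ × ℝ → ℝ × ℝ → ℝ) (δ η ℓk kk ε : ℝ) (n j : ℕ)
    (v : ℕ × ℕ) (hv : v ∈ Idx j) (hε : 0 < ε) (hεh : Real.sqrt ε ≤ 1/2)
    (hL6 : 6 ≤ 2 * (n : ℝ) / 2 ^ j)
    (hfrac : TileFracStable D δ η ℓk kk ε (n : ℝ) j v)
    (z : ℝ × ℝ) (hz : z ∈ Tile (n : ℝ) j v) :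
    ∃ z₀ : ℤ × ℤ, z₀ ∈ TileLat (n : ℝ) j v ∧
      StableDirs D δ η ℓk kk ((z₀.1 : ℝ), (z₀.2 : ℝ)) ∧
      |z.1 - (z₀.1 : ℝ)| ≤ Real.sqrt ε * (2 * (n : ℝ) / 2 ^ j + 1) + 2 ∧
      |z.2 - (z₀.2 : ℝ)| ≤ Real.sqrt ε * (2 * (n : ℝ) / 2 ^ j + 1) + 2 := by
  have hsε := Real.sqrt_nonneg ε
  obtain ⟨hz1, hz2, hz3, hz4⟩ := hz
  obtain ⟨L, hLdef⟩ : ∃ L : ℝ, L = 2 * (n : ℝ) / 2 ^ j := ⟨_, rfl⟩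
  obtain ⟨a, hadef⟩ : ∃ a : ℝ, a = -(n : ℝ) + ((v.1 : ℝ) - 1) * L := ⟨_, rfl⟩
  obtain ⟨c, hcdef⟩ : ∃ c : ℝ, c = -(n : ℝ) + ((v.2 : ℝ) - 1) * L := ⟨_, rfl⟩
  obtain ⟨t, htdef⟩ : ∃ t : ℝ, t = Real.sqrt ε * (L + 1) + 2 := ⟨_, rfl⟩
  have hL6' : (6:ℝ) ≤ L := by rw [hLdef]; exact hL6
  have heA : -(n:ℝ) + (v.1 : ℝ) * (2 * (n:ℝ) / 2 ^ j) = a + L := by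
    rw [hadef, hLdef]; ring
  have heC : -(n:ℝ) + (v.2 : ℝ) * (2 * (n:ℝ) / 2 ^ j) = c + L := by
    rw [hcdef, hLdef]; ring
  have ht2 : 2 ≤ t := by
    have h0 : 0 ≤ Real.sqrt ε * (L + 1) := mul_nonneg hsε (by linarith)
    linarith [htdef.le, htdef.symm.le]
  have htL : t ≤ L := by
    have h1 : Real.sqrt ε * (L + 1) ≤ (1/2) * (L + 1) := by
      apply mul_le_mul_of_nonneg_right hεh; linarith
    linarith [htdef.le, htdef.symm.le]
  have haz : a ≤ z.1 := by rw [hadef, hLdef]; exact hz1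
  have hza : z.1 ≤ a + L := by rw [← heA]; exact hz2
  have hcz : c ≤ z.2 := by rw [hcdef, hLdef]; exact hz3
  have hzc : z.2 ≤ c + L := by rw [← heC]; exact hz4
  obtain ⟨x₀, hx0def⟩ : ∃ x₀ : ℝ, x₀ = max a (min z.1 (a + L - t)) := ⟨_, rfl⟩
  obtain ⟨y₀, hy0def⟩ : ∃ y₀ : ℝ, y₀ = max c (min z.2 (c + L - t)) := ⟨_, rfl⟩
  have hx0a : a ≤ x₀ := by rw [hx0def]; exact le_max_left _ _
  have hx0b : x₀ + t ≤ a + L := by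
    have : x₀ ≤ a + L - t := by
      rw [hx0def]; exact max_le (by linarith) (min_le_right _ _)
    linarith
  have hx0z : x₀ ≤ z.1 := by rw [hx0def]; exact max_le haz (min_le_left _ _)
  have hzx0 : z.1 ≤ x₀ + t := by
    rcases le_total z.1 (a + L - t) with h | h
    · have h2 : z.1 ≤ x₀ := by
        rw [hx0def, min_eq_left h]; exact le_max_right _ _
      linarith
    · have h2 : a + L - t ≤ x₀ := by
        rw [hx0def, min_eq_right h]; exact le_max_right _ _
      linarith
  have hy0c : c ≤ y₀ := by rw [hy0def]; exact le_max_left _ _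
  have hy0b : y₀ + t ≤ c + L := by
    have : y₀ ≤ c + L - t := by
      rw [hy0def]; exact max_le (by linarith) (min_le_right _ _)
    linarith
  have hy0z : y₀ ≤ z.2 := by rw [hy0def]; exact max_le hcz (min_le_left _ _)
  have hzy0 : z.2 ≤ y₀ + t := by
    rcases le_total z.2 (c + L - t) with h | h
    · have h2 : z.2 ≤ y₀ := by
        rw [hy0def, min_eq_left h]; exact le_max_right _ _
      linarith
    · have h2 : c + L - t ≤ y₀ := by
        rw [hy0def, min_eq_right h]; exact le_max_right _ _
      linarith
  -- the small square finset
  obtain ⟨Q, hQdef⟩ : ∃ Q : Finset (ℤ × ℤ),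
      Q = Finset.Icc ⌈x₀⌉ ⌊x₀ + t⌋ ×ˢ Finset.Icc ⌈y₀⌉ ⌊y₀ + t⌋ := ⟨_, rfl⟩
  have hQcard : (t - 1) ^ 2 ≤ (Q.card : ℝ) := by
    have c1 : t - 1 ≤ ((Finset.Icc ⌈x₀⌉ ⌊x₀ + t⌋).card : ℝ) := by
      have := le_Icc_card x₀ (x₀ + t) t (by linarith); linarith
    have c2 : t - 1 ≤ ((Finset.Icc ⌈y₀⌉ ⌊y₀ + t⌋).card : ℝ) := by
      have := le_Icc_card y₀ (y₀ + t) t (by linarith); linarith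
    have hc : Q.card = (Finset.Icc ⌈x₀⌉ ⌊x₀ + t⌋).card * (Finset.Icc ⌈y₀⌉ ⌊y₀ + t⌋).card := by
      rw [hQdef]; exact Finset.card_product _ _
    rw [hc]
    push_cast
    nlinarith [c1, c2, ht2]
  -- Q sits inside the tile, within distance t of z
  have hQT : ∀ p : ℤ × ℤ, p ∈ Q → p ∈ TileLat (n : ℝ) j v ∧
      |z.1 - (p.1 : ℝ)| ≤ t ∧ |z.2 - (p.2 : ℝ)| ≤ t := by
    intro p hp
    rw [hQdef, Finset.mem_product, Finset.mem_Icc, Finset.mem_Icc] at hp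
    obtain ⟨⟨p1l, p1u⟩, ⟨p2l, p2u⟩⟩ := hp
    have b1 : x₀ ≤ (p.1 : ℝ) := le_trans (Int.le_ceil x₀) (by exact_mod_cast p1l)
    have b2 : (p.1 : ℝ) ≤ x₀ + t := le_trans (by exact_mod_cast p1u) (Int.floor_le _)
    have b3 : y₀ ≤ (p.2 : ℝ) := le_trans (Int.le_ceil y₀) (by exact_mod_cast p2l)
    have b4 : (p.2 : ℝ) ≤ y₀ + t := le_trans (by exact_mod_cast p2u) (Int.floor_le _)
    refine ⟨⟨?_, ?_, ?_, ?_⟩, ?_, ?_⟩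
    · show -(n:ℝ) + ((v.1 : ℝ) - 1) * (2 * (n:ℝ) / 2 ^ j) ≤ (p.1 : ℝ)
      rw [← hLdef, ← hadef]
      linarith
    · show (p.1 : ℝ) ≤ -(n:ℝ) + (v.1 : ℝ) * (2 * (n:ℝ) / 2 ^ j)
      rw [heA]
      linarith
    · show -(n:ℝ) + ((v.2 : ℝ) - 1) * (2 * (n:ℝ) / 2 ^ j) ≤ (p.2 : ℝ)
      rw [← hLdef, ← hcdef]
      linarith
    · show (p.2 : ℝ) ≤ -(n:ℝ) + (v.2 : ℝ) * (2 * (n:ℝ) / 2 ^ j)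
      rw [heC]
      linarith
    · rw [abs_le]; constructor <;> linarith
    · rw [abs_le]; constructor <;> linarith
  -- pigeonhole
  have hTsub : TileLat (n : ℝ) j v ⊆
      ↑(Finset.Icc ⌈a⌉ ⌊a + L⌋ ×ˢ Finset.Icc ⌈c⌉ ⌊c + L⌋) := by
    intro p hp
    obtain ⟨q1, q2, q3, q4⟩ := hp
    rw [Finset.coe_product]
    refine ⟨Finset.mem_coe.mpr (Finset.mem_Icc.mpr ⟨Int.ceil_le.mpr ?_, Int.le_floor.mpr ?_⟩),
      Finset.mem_coe.mpr (Finset.mem_Icc.mpr ⟨Int.ceil_le.mpr ?_, Int.le_floor.mpr ?_⟩)⟩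
    · rw [hadef, hLdef]; exact q1
    · rw [← heA]; exact q2
    · rw [hcdef, hLdef]; exact q3
    · rw [← heC]; exact q4
  have hTfin : (TileLat (n : ℝ) j v).Finite :=
    Set.Finite.subset (Finset.finite_toSet _) hTsub
  have hTcard : ((TileLat (n : ℝ) j v).ncard : ℝ) ≤ (L + 1) ^ 2 := by
    have hmono := Set.ncard_le_ncard hTsub (Finset.finite_toSet _)
    rw [Set.ncard_coe_finset] at hmono
    have c1 : ((Finset.Icc ⌈a⌉ ⌊a + L⌋).card : ℝ) ≤ L + 1 :=
      Icc_card_le a (a + L) L (by linarith) (by linarith)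
    have c2 : ((Finset.Icc ⌈c⌉ ⌊c + L⌋).card : ℝ) ≤ L + 1 :=
      Icc_card_le c (c + L) L (by linarith) (by linarith)
    have hcard : (Finset.Icc ⌈a⌉ ⌊a + L⌋ ×ˢ Finset.Icc ⌈c⌉ ⌊c + L⌋).card =
        (Finset.Icc ⌈a⌉ ⌊a + L⌋).card * (Finset.Icc ⌈c⌉ ⌊c + L⌋).card :=
      Finset.card_product _ _
    have hh : ((TileLat (n : ℝ) j v).ncard : ℝ) ≤
        ((Finset.Icc ⌈a⌉ ⌊a + L⌋).card : ℝ) * ((Finset.Icc ⌈c⌉ ⌊c + L⌋).card : ℝ) := by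
      rw [← Nat.cast_mul, ← hcard]; exact_mod_cast hmono
    nlinarith [(by positivity : (0:ℝ) ≤ ((Finset.Icc ⌈a⌉ ⌊a + L⌋).card : ℝ)),
      (by positivity : (0:ℝ) ≤ ((Finset.Icc ⌈c⌉ ⌊c + L⌋).card : ℝ))]
  -- main pigeonhole step
  have key : ∃ p ∈ Q, p ∈ {w ∈ TileLat (n : ℝ) j v |
      StableDirs D δ η ℓk kk ((w.1 : ℝ), (w.2 : ℝ))} := by
    by_contra hcon
    push_neg at hcon
    have hsub : ↑Q ⊆ TileLat (n : ℝ) j v \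
        {w ∈ TileLat (n : ℝ) j v | StableDirs D δ η ℓk kk ((w.1 : ℝ), (w.2 : ℝ))} := by
      intro p hp
      have hp' : p ∈ Q := hp
      exact ⟨(hQT p hp').1, hcon p hp'⟩
    have hSsub : {w ∈ TileLat (n : ℝ) j v |
        StableDirs D δ η ℓk kk ((w.1 : ℝ), (w.2 : ℝ))} ⊆ TileLat (n : ℝ) j v :=
      fun w hw => hw.1
    have hd := Set.ncard_diff hSsub (hTfin.subset hSsub)
    have hSle : ({w ∈ TileLat (n : ℝ) j v |
        StableDirs D δ η ℓk kk ((w.1 : ℝ), (w.2 : ℝ))}).ncard ≤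
        (TileLat (n : ℝ) j v).ncard := Set.ncard_le_ncard hSsub hTfin
    have hQle := Set.ncard_le_ncard hsub hTfin.diff
    rw [Set.ncard_coe_finset] at hQle
    have hQle' : (Q.card : ℝ) ≤ ((TileLat (n : ℝ) j v).ncard : ℝ) -
        (({w ∈ TileLat (n : ℝ) j v |
          StableDirs D δ η ℓk kk ((w.1 : ℝ), (w.2 : ℝ))}).ncard : ℝ) := by
      rw [← Nat.cast_sub hSle, ← hd]; exact_mod_cast hQle
    have hfrac' := hfrac
    unfold TileFracStable at hfrac'
    have hεT : ((TileLat (n : ℝ) j v).ncard : ℝ) -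
        (({w ∈ TileLat (n : ℝ) j v |
          StableDirs D δ η ℓk kk ((w.1 : ℝ), (w.2 : ℝ))}).ncard : ℝ) ≤
        ε * ((TileLat (n : ℝ) j v).ncard : ℝ) := by nlinarith [hfrac']
    have hfin : (t - 1) ^ 2 ≤ ε * (L + 1) ^ 2 := by
      have h0 : ε * ((TileLat (n : ℝ) j v).ncard : ℝ) ≤ ε * (L + 1) ^ 2 :=
        mul_le_mul_of_nonneg_left hTcard hε.le
      linarith
    have hsq : Real.sqrt ε ^ 2 = ε := Real.sq_sqrt hε.le
    have hexp : (t - 1) ^ 2 = ε * (L + 1) ^ 2 + 2 * Real.sqrt ε * (L + 1) + 1 := by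
      rw [htdef]; nlinarith [hsq]
    nlinarith [hfin, hexp, hsε, hL6', mul_nonneg hsε (by linarith : (0:ℝ) ≤ L + 1)]
  obtain ⟨p, hpQ, hpS⟩ := key
  have hb := (hQT p hpQ)
  refine ⟨p, hpS.1, hpS.2, ?_, ?_⟩
  · rw [← hLdef]; linarith [hb.2.1, htdef.le, htdef.symm.le]
  · rw [← hLdef]; linarith [hb.2.2, htdef.le, htdef.symm.le]
lemma norm2_smul_dir' (w aa : ℝ) : norm2 (w • dir aa) = |w| := by
  have h1 : (w • dir aa).1 = w * Real.cos aa := rfl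
  have h2 : (w • dir aa).2 = w * Real.sin aa := rfl
  rw [norm2, h1, h2]
  have h3 : (w * Real.cos aa) ^ 2 + (w * Real.sin aa) ^ 2 = w ^ 2 := by
    have := Real.sin_sq_add_cos_sq aa; nlinarith
  rw [h3, Real.sqrt_sq_eq_abs]

lemma tile_coord_bounds (n j : ℕ) (v : ℕ × ℕ) (hv : v ∈ Idx j) (p : ℝ × ℝ)
    (hp : p ∈ Tile (n : ℝ) j v) : |p.1| ≤ (n : ℝ) ∧ |p.2| ≤ (n : ℝ) := by
  obtain ⟨h1, h2, h3, h4⟩ := hp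
  obtain ⟨w1, w2, w3, w4⟩ := hv
  have hLpos : (0:ℝ) ≤ 2 * (n:ℝ) / 2 ^ j := by positivity
  have hv1 : (1:ℝ) ≤ (v.1 : ℝ) := by exact_mod_cast w1
  have hv2 : (v.1 : ℝ) ≤ (2:ℝ) ^ j := by exact_mod_cast w2
  have hv3 : (1:ℝ) ≤ (v.2 : ℝ) := by exact_mod_cast w3
  have hv4 : (v.2 : ℝ) ≤ (2:ℝ) ^ j := by exact_mod_cast w4
  have hkey : (2:ℝ) ^ j * (2 * (n:ℝ) / 2 ^ j) = 2 * (n:ℝ) := by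
    field_simp
  have hm1 : (v.1 : ℝ) * (2 * (n:ℝ) / 2 ^ j) ≤ 2 * (n:ℝ) := by
    calc (v.1 : ℝ) * (2 * (n:ℝ) / 2 ^ j) ≤ (2:ℝ) ^ j * (2 * (n:ℝ) / 2 ^ j) :=
          mul_le_mul_of_nonneg_right hv2 hLpos
      _ = 2 * (n:ℝ) := hkey
  have hm2 : (v.2 : ℝ) * (2 * (n:ℝ) / 2 ^ j) ≤ 2 * (n:ℝ) := by
    calc (v.2 : ℝ) * (2 * (n:ℝ) / 2 ^ j) ≤ (2:ℝ) ^ j * (2 * (n:ℝ) / 2 ^ j) :=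
          mul_le_mul_of_nonneg_right hv4 hLpos
      _ = 2 * (n:ℝ) := hkey
  have hl1 : 0 ≤ ((v.1 : ℝ) - 1) * (2 * (n:ℝ) / 2 ^ j) :=
    mul_nonneg (by linarith) hLpos
  have hl2 : 0 ≤ ((v.2 : ℝ) - 1) * (2 * (n:ℝ) / 2 ^ j) :=
    mul_nonneg (by linarith) hLpos
  constructor <;> rw [abs_le] <;> constructor <;> linarith
set_option maxHeartbeats 2000000 in
theorem tile_frac_stable_implies_all_stable
    (j m : ℕ) (δ η α b : ℝ) (hδ : 0 < δ) (hη : 0 < η) (hα : 0 < α) (hab : α < b) :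
    ∃ C : ℝ, 0 < C ∧ ∃ ε₀ : ℝ, 0 < ε₀ ∧ ∀ ε : ℝ, 0 < ε → ε ≤ ε₀ →
    ∃ N : ℕ, ∀ n : ℕ, N ≤ n →
    ∀ D : ℝ × ℝ → ℝ × ℝ → ℝ, GoodPT α b (10 * n) (Real.sqrt n) D →
    ∀ v ∈ Idx j,
      TileFracStable D δ η ((n : ℝ) / 2 ^ (j + m)) ((2 : ℝ) ^ (2 * m)) ε (n : ℝ) j v →
      ∀ z ∈ Tile (n : ℝ) j v,
        StableDirs D (2 * δ) η
          (max (C * Real.sqrt ε * ((n : ℝ) / 2 ^ j)) ((n : ℝ) / 2 ^ (j + m)))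
          ((2 : ℝ) ^ (2 * m) * ((n : ℝ) / 2 ^ (j + m)) /
            max (C * Real.sqrt ε * ((n : ℝ) / 2 ^ j)) ((n : ℝ) / 2 ^ (j + m))) z := by
  have hb : 0 < b := lt_trans hα hab
  have h1δ : (0:ℝ) < 1 + δ := by linarith
  have h2δ : (0:ℝ) < 1 + 2 * δ := by linarith
  obtain ⟨c₀, hc₀def⟩ : ∃ c₀ : ℝ, c₀ = δ * α / (4 * (1 + δ) * (1 + 2 * δ)) := ⟨_, rfl⟩
  have hc₀ : 0 < c₀ := by rw [hc₀def]; positivity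
  obtain ⟨M, hMdef⟩ : ∃ M : ℝ,
      M = min (1/2) (min (((2:ℝ) ^ m)⁻¹) (c₀ / (48 * b * 2 ^ m))) := ⟨_, rfl⟩
  have hM : 0 < M := by
    rw [hMdef]
    refine lt_min (by norm_num) (lt_min (by positivity) (by positivity))
  refine ⟨1, one_pos, M ^ 2, by positivity, ?_⟩
  intro ε hε hεM
  have hsε := Real.sqrt_nonneg ε
  have hsεM : Real.sqrt ε ≤ M := by
    calc Real.sqrt ε ≤ Real.sqrt (M ^ 2) := Real.sqrt_le_sqrt hεM
      _ = M := Real.sqrt_sq hM.le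
  refine ⟨max (4 ^ (j + m)) (max (3 * 2 ^ j) (⌈28 * b * 2 ^ (j + m) / c₀⌉₊ + 1)), ?_⟩
  intro n hn D hD v hv hfrac z hz
  have hn1 : 4 ^ (j + m) ≤ n := le_trans (le_max_left _ _) hn
  have hn2 : 3 * 2 ^ j ≤ n := le_trans (le_trans (le_max_left _ _) (le_max_right _ _)) hn
  have hn3 : ⌈28 * b * 2 ^ (j + m) / c₀⌉₊ + 1 ≤ n :=
    le_trans (le_trans (le_max_right _ _) (le_max_right _ _)) hn
  have hn3' : 28 * b * (2:ℝ) ^ (j + m) / c₀ ≤ (n : ℝ) := by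
    have h0 : ⌈28 * b * (2:ℝ) ^ (j + m) / c₀⌉₊ ≤ n := by omega
    exact le_trans (Nat.le_ceil _) (Nat.cast_le.mpr h0)
  have hnpos : 0 < n := lt_of_lt_of_le (by positivity : 0 < 4 ^ (j + m)) hn1
  have hnR : (0:ℝ) < (n : ℝ) := by exact_mod_cast hnpos
  have hlpos : (0:ℝ) < (n : ℝ) / 2 ^ (j + m) := by positivity
  -- the max collapses
  have hM2 : Real.sqrt ε ≤ ((2:ℝ) ^ m)⁻¹ :=
    le_trans hsεM (by rw [hMdef]; exact le_trans (min_le_right _ _) (min_le_left _ _))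
  have hM3 : Real.sqrt ε ≤ c₀ / (48 * b * 2 ^ m) :=
    le_trans hsεM (by rw [hMdef]; exact le_trans (min_le_right _ _) (min_le_right _ _))
  have hM1 : Real.sqrt ε ≤ 1/2 := le_trans hsεM (by rw [hMdef]; exact min_le_left _ _)
  have hsplit : (n:ℝ) / 2 ^ (j + m) = ((2:ℝ) ^ m)⁻¹ * ((n:ℝ) / 2 ^ j) := by
    rw [pow_add]; ring
  have hmax : max (1 * Real.sqrt ε * ((n:ℝ) / 2 ^ j)) ((n:ℝ) / 2 ^ (j + m)) =
      (n:ℝ) / 2 ^ (j + m) := by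
    apply max_eq_right
    rw [one_mul, hsplit]
    exact mul_le_mul_of_nonneg_right hM2 (by positivity)
  rw [hmax]
  have hkeq : (2:ℝ) ^ (2 * m) * ((n:ℝ) / 2 ^ (j + m)) / ((n:ℝ) / 2 ^ (j + m)) =
      (2:ℝ) ^ (2 * m) := by
    rw [mul_div_assoc, div_self (ne_of_gt hlpos), mul_one]
  rw [hkeq]
  -- find a stable lattice point near z
  have hL6 : (6:ℝ) ≤ 2 * (n:ℝ) / 2 ^ j := by
    rw [le_div_iff₀ (by positivity : (0:ℝ) < (2:ℝ) ^ j)]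
    have : (3:ℝ) * 2 ^ j ≤ (n:ℝ) := by exact_mod_cast hn2
    nlinarith
  obtain ⟨z₀, hz₀T, hst, hd1, hd2⟩ := exists_stable_near D δ η ((n:ℝ) / 2 ^ (j + m))
    ((2:ℝ) ^ (2 * m)) ε n j v hv hε hM1 hL6 hfrac z hz
  intro i hi k'' hk1 hk2
  have hK : (1:ℝ) ≤ (k'' : ℝ) := by exact_mod_cast hk1
  have hK0 : (0:ℝ) ≤ (k'' : ℝ) := by linarith
  -- notation
  have hstp := hst i hi k'' hk1 hk2
  -- distance from z to z₀
  obtain ⟨r, hrdef⟩ : ∃ r : ℝ, r = 2 * (Real.sqrt ε * (2 * (n:ℝ) / 2 ^ j + 1) + 2) :=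
    ⟨_, rfl⟩
  have hρ : norm2 (z - ((z₀.1 : ℝ), (z₀.2 : ℝ))) ≤ r := by
    have h1 : |(z - ((z₀.1 : ℝ), (z₀.2 : ℝ))).1| = |z.1 - (z₀.1 : ℝ)| := rfl
    have h2 : |(z - ((z₀.1 : ℝ), (z₀.2 : ℝ))).2| = |z.2 - (z₀.2 : ℝ)| := rfl
    have := norm2_le_abs_add (z - ((z₀.1 : ℝ), (z₀.2 : ℝ)))
    rw [h1, h2] at this
    rw [hrdef]
    linarith
  have hρ' : norm2 (((z₀.1 : ℝ), (z₀.2 : ℝ)) - z) ≤ r := by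
    rw [norm2_sub_comm]; exact hρ
  have hr0 : 0 ≤ r := le_trans (norm2_nonneg' _) hρ
  -- the error term bound : 3*b*r + 2*b ≤ c₀ * (n/2^(j+m))
  have herr : 3 * b * r + 2 * b ≤ c₀ * ((n:ℝ) / 2 ^ (j + m)) := by
    have hL1 : (1:ℝ) ≤ 2 * (n:ℝ) / 2 ^ j := by linarith
    have e1 : Real.sqrt ε * (2 * (n:ℝ) / 2 ^ j + 1) ≤
        Real.sqrt ε * (2 * (2 * (n:ℝ) / 2 ^ j)) :=
      mul_le_mul_of_nonneg_left (by linarith) hsε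
    have e2 : Real.sqrt ε * (2 * (2 * (n:ℝ) / 2 ^ j)) ≤
        c₀ / (48 * b * 2 ^ m) * (4 * ((n:ℝ) / 2 ^ j)) := by
      have : (2:ℝ) * (2 * (n:ℝ) / 2 ^ j) = 4 * ((n:ℝ) / 2 ^ j) := by ring
      rw [this]
      exact mul_le_mul_of_nonneg_right hM3 (by positivity)
    have e3 : c₀ / (48 * b * 2 ^ m) * (4 * ((n:ℝ) / 2 ^ j)) =
        c₀ * ((n:ℝ) / 2 ^ (j + m)) / (12 * b) := by
      rw [pow_add]; ring
    have e4 : Real.sqrt ε * (2 * (n:ℝ) / 2 ^ j + 1) ≤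
        c₀ * ((n:ℝ) / 2 ^ (j + m)) / (12 * b) := by linarith
    have e5 : 3 * b * r = 6 * b * (Real.sqrt ε * (2 * (n:ℝ) / 2 ^ j + 1)) + 12 * b := by
      rw [hrdef]; ring
    have e6 : 6 * b * (Real.sqrt ε * (2 * (n:ℝ) / 2 ^ j + 1)) ≤
        6 * b * (c₀ * ((n:ℝ) / 2 ^ (j + m)) / (12 * b)) :=
      mul_le_mul_of_nonneg_left e4 (by positivity)
    have e7 : 6 * b * (c₀ * ((n:ℝ) / 2 ^ (j + m)) / (12 * b)) =
        c₀ * ((n:ℝ) / 2 ^ (j + m)) / 2 := by field_simp; ring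
    have e8 : 14 * b ≤ c₀ * ((n:ℝ) / 2 ^ (j + m)) / 2 := by
      rw [div_le_iff₀ hc₀] at hn3'
      have h11 : c₀ * ((n:ℝ) / 2 ^ (j + m)) / 2 = c₀ * (n:ℝ) / (2 * 2 ^ (j + m)) := by
        ring
      rw [h11, le_div_iff₀ (by positivity : (0:ℝ) < 2 * 2 ^ (j + m))]
      nlinarith [hn3']
    linarith [e5.le, e5.symm.le, e6, e7.le, e7.symm.le, e8]
  -- box membership and distance facts for the stable point
  have hcb := tile_coord_bounds n j v hv ((z₀.1 : ℝ), (z₀.2 : ℝ)) hz₀T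
  have hbox1 : ((z₀.1 : ℝ), (z₀.2 : ℝ)) ∈ Box (10 * (n:ℝ)) := by
    constructor
    · exact le_trans hcb.1 (by linarith)
    · exact le_trans hcb.2 (by linarith)
  have h2pow : (1:ℝ) ≤ (2:ℝ) ^ (j + m) := one_le_pow₀ (by norm_num)
  have hll : (n:ℝ) / 2 ^ (j + m) ≤ (n:ℝ) := by
    rw [div_le_iff₀ (by positivity : (0:ℝ) < (2:ℝ) ^ (j + m))]
    nlinarith [h2pow]
  have habs1 : |(dir ((i:ℝ) * η)).1| ≤ 1 := dir_abs_fst _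
  have habs2 : |(dir ((i:ℝ) * η)).2| ≤ 1 := dir_abs_snd _
  have hbox2 : ((z₀.1 : ℝ), (z₀.2 : ℝ)) + ((n:ℝ) / 2 ^ (j + m)) • dir ((i:ℝ) * η) ∈
      Box (10 * (n:ℝ)) := by
    have hc1 : (((z₀.1 : ℝ), (z₀.2 : ℝ)) + ((n:ℝ) / 2 ^ (j + m)) • dir ((i:ℝ) * η)).1 =
        (z₀.1 : ℝ) + ((n:ℝ) / 2 ^ (j + m)) * (dir ((i:ℝ) * η)).1 := rfl
    have hc2 : (((z₀.1 : ℝ), (z₀.2 : ℝ)) + ((n:ℝ) / 2 ^ (j + m)) • dir ((i:ℝ) * η)).2 =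
        (z₀.2 : ℝ) + ((n:ℝ) / 2 ^ (j + m)) * (dir ((i:ℝ) * η)).2 := rfl
    have hm1 : |((n:ℝ) / 2 ^ (j + m)) * (dir ((i:ℝ) * η)).1| ≤ (n:ℝ) / 2 ^ (j + m) := by
      rw [abs_mul, abs_of_pos hlpos]
      nlinarith [abs_nonneg (dir ((i:ℝ) * η)).1]
    have hm2 : |((n:ℝ) / 2 ^ (j + m)) * (dir ((i:ℝ) * η)).2| ≤ (n:ℝ) / 2 ^ (j + m) := by
      rw [abs_mul, abs_of_pos hlpos]
      nlinarith [abs_nonneg (dir ((i:ℝ) * η)).2]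
    constructor
    · rw [hc1]
      calc |(z₀.1 : ℝ) + ((n:ℝ) / 2 ^ (j + m)) * (dir ((i:ℝ) * η)).1| ≤
            |(z₀.1 : ℝ)| + |((n:ℝ) / 2 ^ (j + m)) * (dir ((i:ℝ) * η)).1| := abs_add_le _ _
        _ ≤ 10 * (n:ℝ) := by linarith [hcb.1]
    · rw [hc2]
      calc |(z₀.2 : ℝ) + ((n:ℝ) / 2 ^ (j + m)) * (dir ((i:ℝ) * η)).2| ≤
            |(z₀.2 : ℝ)| + |((n:ℝ) / 2 ^ (j + m)) * (dir ((i:ℝ) * η)).2| := abs_add_le _ _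
        _ ≤ 10 * (n:ℝ) := by linarith [hcb.2]
  have harg : ((z₀.1 : ℝ), (z₀.2 : ℝ)) -
      (((z₀.1 : ℝ), (z₀.2 : ℝ)) + ((n:ℝ) / 2 ^ (j + m)) • dir ((i:ℝ) * η)) =
      (-((n:ℝ) / 2 ^ (j + m))) • dir ((i:ℝ) * η) := by
    rw [neg_smul]
    abel
  have hnorml : norm2 (((z₀.1 : ℝ), (z₀.2 : ℝ)) -
      (((z₀.1 : ℝ), (z₀.2 : ℝ)) + ((n:ℝ) / 2 ^ (j + m)) • dir ((i:ℝ) * η))) =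
      (n:ℝ) / 2 ^ (j + m) := by
    rw [harg, norm2_smul_dir', abs_neg, abs_of_pos hlpos]
  have hsqrtl : Real.sqrt (n:ℝ) ≤ (n:ℝ) / 2 ^ (j + m) := by
    have h4 : ((2:ℝ) ^ (j + m)) ^ 2 ≤ (n:ℝ) := by
      have h4' : ((4:ℕ) ^ (j + m) : ℝ) ≤ (n:ℝ) := by exact_mod_cast hn1
      calc ((2:ℝ) ^ (j + m)) ^ 2 = (4:ℝ) ^ (j + m) := by
            rw [← pow_mul, mul_comm (j + m) 2, pow_mul]; norm_num
        _ ≤ (n:ℝ) := by push_cast at h4'; exact h4'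
    have h5 : (2:ℝ) ^ (j + m) ≤ Real.sqrt (n:ℝ) :=
      (Real.le_sqrt (by positivity) hnR.le).mpr h4
    have h6 : Real.sqrt (n:ℝ) * 2 ^ (j + m) ≤ (n:ℝ) := by
      calc Real.sqrt (n:ℝ) * 2 ^ (j + m) ≤ Real.sqrt (n:ℝ) * Real.sqrt (n:ℝ) :=
            mul_le_mul_of_nonneg_left h5 (Real.sqrt_nonneg _)
        _ = (n:ℝ) := Real.mul_self_sqrt hnR.le
    rw [le_div_iff₀ (by positivity : (0:ℝ) < (2:ℝ) ^ (j + m))]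
    exact h6
  have hg : α * ((n:ℝ) / 2 ^ (j + m)) ≤
      D ((z₀.1 : ℝ), (z₀.2 : ℝ))
        (((z₀.1 : ℝ), (z₀.2 : ℝ)) + ((n:ℝ) / 2 ^ (j + m)) • dir ((i:ℝ) * η)) := by
    have hlow := hD.2.2.2 ((z₀.1 : ℝ), (z₀.2 : ℝ))
      (((z₀.1 : ℝ), (z₀.2 : ℝ)) + ((n:ℝ) / 2 ^ (j + m)) • dir ((i:ℝ) * η))
      hbox1 hbox2 (by rw [hnorml]; exact hsqrtl)
    rw [hnorml] at hlow
    exact hlow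
  -- error term and shift inequalities
  obtain ⟨e, hedef⟩ : ∃ e : ℝ, e = 3 * b * r + 2 * b := ⟨_, rfl⟩
  have he0 : 0 ≤ e := by
    rw [hedef]
    have := mul_nonneg (by linarith : (0:ℝ) ≤ 3 * b) hr0
    linarith
  have hec : e ≤ c₀ * ((n:ℝ) / 2 ^ (j + m)) := by rw [hedef]; exact herr
  have hshift1 : ∀ w : ℝ,
      D z (z + w • dir ((i:ℝ) * η)) ≤
        D ((z₀.1 : ℝ), (z₀.2 : ℝ)) (((z₀.1 : ℝ), (z₀.2 : ℝ)) + w • dir ((i:ℝ) * η)) +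
          2 * e := by
    intro w
    have := D_shift hD hb (p := z) (q := z + w • dir ((i:ℝ) * η))
      (r := ((z₀.1 : ℝ), (z₀.2 : ℝ))) (s := ((z₀.1 : ℝ), (z₀.2 : ℝ)) + w • dir ((i:ℝ) * η))
      (ρ := r) hρ' (by rw [add_sub_add_right_eq_sub]; exact hρ)
    rw [hedef]
    linarith
  have hshift2 : ∀ w : ℝ,
      D ((z₀.1 : ℝ), (z₀.2 : ℝ)) (((z₀.1 : ℝ), (z₀.2 : ℝ)) + w • dir ((i:ℝ) * η)) ≤
        D z (z + w • dir ((i:ℝ) * η)) + 2 * e := by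
    intro w
    have := D_shift hD hb (p := ((z₀.1 : ℝ), (z₀.2 : ℝ)))
      (q := ((z₀.1 : ℝ), (z₀.2 : ℝ)) + w • dir ((i:ℝ) * η))
      (r := z) (s := z + w • dir ((i:ℝ) * η))
      (ρ := r) hρ (by rw [add_sub_add_right_eq_sub]; exact hρ')
    rw [hedef]
    linarith
  -- abstract the four distances
  obtain ⟨X, hXdef⟩ : ∃ X : ℝ,
      X = D z (z + ((k'' : ℝ) * ((n:ℝ) / 2 ^ (j + m))) • dir ((i:ℝ) * η)) := ⟨_, rfl⟩
  obtain ⟨Y, hYdef⟩ : ∃ Y : ℝ,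
      Y = D z (z + ((n:ℝ) / 2 ^ (j + m)) • dir ((i:ℝ) * η)) := ⟨_, rfl⟩
  obtain ⟨A, hAdef⟩ : ∃ A : ℝ,
      A = D ((z₀.1 : ℝ), (z₀.2 : ℝ)) (((z₀.1 : ℝ), (z₀.2 : ℝ)) +
        ((k'' : ℝ) * ((n:ℝ) / 2 ^ (j + m))) • dir ((i:ℝ) * η)) := ⟨_, rfl⟩
  obtain ⟨G, hGdef⟩ : ∃ G : ℝ,
      G = D ((z₀.1 : ℝ), (z₀.2 : ℝ)) (((z₀.1 : ℝ), (z₀.2 : ℝ)) +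
        ((n:ℝ) / 2 ^ (j + m)) • dir ((i:ℝ) * η)) := ⟨_, rfl⟩
  rw [← hXdef, ← hYdef]
  have hS1 := hstp.1
  have hS2 := hstp.2
  rw [← hAdef, ← hGdef] at hS1 hS2
  have h1 := hshift1 ((n:ℝ) / 2 ^ (j + m))
  rw [← hYdef, ← hGdef] at h1
  have h2 := hshift2 ((n:ℝ) / 2 ^ (j + m))
  rw [← hYdef, ← hGdef] at h2
  have h3 := hshift1 ((k'' : ℝ) * ((n:ℝ) / 2 ^ (j + m)))
  rw [← hXdef, ← hAdef] at h3
  have h4 := hshift2 ((k'' : ℝ) * ((n:ℝ) / 2 ^ (j + m)))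
  rw [← hXdef, ← hAdef] at h4
  have hgG : α * ((n:ℝ) / 2 ^ (j + m)) ≤ G := by rw [hGdef]; exact hg
  have hGpos : 0 < G := lt_of_lt_of_le (by positivity) hgG
  have he4 : 4 * (1 + δ) * (1 + 2 * δ) * e ≤ δ * G := by
    rw [hc₀def] at hec
    have h5 : 4 * (1 + δ) * (1 + 2 * δ) * e ≤
        4 * (1 + δ) * (1 + 2 * δ) * (δ * α / (4 * (1 + δ) * (1 + 2 * δ)) *
          ((n:ℝ) / 2 ^ (j + m))) := mul_le_mul_of_nonneg_left hec (by positivity)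
    have h6 : 4 * (1 + δ) * (1 + 2 * δ) * (δ * α / (4 * (1 + δ) * (1 + 2 * δ)) *
        ((n:ℝ) / 2 ^ (j + m))) = δ * (α * ((n:ℝ) / 2 ^ (j + m))) := by
      field_simp
    have h7 : δ * (α * ((n:ℝ) / 2 ^ (j + m))) ≤ δ * G :=
      mul_le_mul_of_nonneg_left hgG hδ.le
    linarith
  exact final_arith δ e G A X Y (k'' : ℝ) hδ he0 hK hGpos he4 hS1 hS2 h1 h2 h3 h4
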